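/- Let m and n be integers with 2 ≤ m ≤ n and n ≥ 3, and let m_0 = max{k ∈ ℕ : k(k−1) − 1 ≤ n}. If m_0 + 1 ≤ m ≤ n/2, then the locating chromatic number of K_m □ K_n equals n + 2. -/

import Mathlib

open SimpleGraph

/-- The distance from a vertex to a set of vertices. -/
noncomputable def setDist {V : Type*} (G : SimpleGraph V) (v : V) (S : Set V) : ℕ :=
  sInf (G.dist v '' S)

/-- The color code of a vertex with respect to a `k`-coloring `c`:
the tuple of distances to the color classes. -/
noncomputable def colorCode {V : Type*} (G : SimpleGraph V) {k : ℕ} (c : V → Fin k)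
    (v : V) : Fin k → ℕ :=
  fun i => setDist G v (c ⁻¹' {i})

/-- `c` is a locating `k`-coloring of `G`: a proper coloring onto the `k` colors
such that distinct vertices have distinct color codes. -/
def IsLocatingColoring {V : Type*} (G : SimpleGraph V) {k : ℕ} (c : V → Fin k) : Prop :=
  Function.Surjective c ∧
  (∀ u v : V, G.Adj u v → c u ≠ c v) ∧
  Function.Injective (colorCode G c)

/-- The locating chromatic number: the least `k` admitting a locating `k`-coloring. -/
noncomputable def locatingChromaticNumber {V : Type*} (G : SimpleGraph V) : ℕ :=
  sInf {k : ℕ | ∃ c : V → Fin k, IsLocatingColoring G c}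

/-- A vertex is colorful w.r.t. a coloring `c` if every color appears in its
closed neighborhood. -/
def IsColorful {V : Type*} (G : SimpleGraph V) {k : ℕ} (c : V → Fin k) (v : V) : Prop :=
  ∀ i : Fin k, ∃ u : V, (u = v ∨ G.Adj v u) ∧ c u = i

open scoped Classical

/-- helper: two numbers below `2*n` with the same residue mod `n`. -/
lemma mod_cases3 {n a b : ℕ} (h : a % n = b % n) (ha : a < 2*n) (hb : b < 2*n) :
    a = b ∨ a = b + n ∨ b = a + n := by
  rcases Nat.lt_or_ge a n with h1 | h1 <;> rcases Nat.lt_or_ge b n with h2 | h2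
  · rw [Nat.mod_eq_of_lt h1, Nat.mod_eq_of_lt h2] at h; omega
  · rw [Nat.mod_eq_of_lt h1, Nat.mod_eq_sub_mod h2, Nat.mod_eq_of_lt (by omega)] at h; omega
  · rw [Nat.mod_eq_sub_mod h1, Nat.mod_eq_of_lt (by omega), Nat.mod_eq_of_lt h2] at h; omega
  · rw [Nat.mod_eq_sub_mod h1, Nat.mod_eq_sub_mod h2, Nat.mod_eq_of_lt (by omega),
      Nat.mod_eq_of_lt (by omega)] at h; omega

lemma dval_add {n i j : ℕ} (hi : i ≤ n) (hj : j < n) : ((j + n - i) % n + i) % n = j := by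
  have h1 : ((j + n - i) % n + i) % n = ((j + n - i) + i) % n :=
    Nat.ModEq.add_right i (Nat.mod_modEq (j + n - i) n)
  have h2 : (j + n - i) + i = j + n := by omega
  rw [h1, h2, Nat.add_mod_right, Nat.mod_eq_of_lt hj]

lemma dval_inv {n i t : ℕ} (hi : i ≤ n) (ht : t < n) : ((t + i) % n + n - i) % n = t := by
  have h0 : (t + i) % n + n - i = (t + i) % n + (n - i) := by omega
  have h1 : ((t + i) % n + (n - i)) % n = ((t + i) + (n - i)) % n :=
    Nat.ModEq.add_right (n - i) (Nat.mod_modEq (t + i) n)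
  have h2 : (t + i) + (n - i) = t + n := by omega
  rw [h0, h1, h2, Nat.add_mod_right, Nat.mod_eq_of_lt ht]

/-- Auxiliary value function for the explicit coloring. -/
def cvalAux (m r d : ℕ) : ℕ :=
  if d < m then (if d = r then 2*m else 2*d)
  else if d < 2*m then (if d = r + m then 2*m+1 else 2*(d-m)+1)
  else d + 2

/-- The explicit locating coloring of the `m × n` grid with `n+2` colors. -/
def cval (m n r j : ℕ) : ℕ := cvalAux m r ((j + n - r) % n)

lemma cvalAux_spec (m r d : ℕ) :
    (d < m ∧ d ≠ r ∧ cvalAux m r d = 2*d) ∨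
    (d < m ∧ d = r ∧ cvalAux m r d = 2*m) ∨
    (m ≤ d ∧ d < 2*m ∧ d ≠ r + m ∧ cvalAux m r d = 2*(d-m)+1) ∨
    (m ≤ d ∧ d < 2*m ∧ d = r + m ∧ cvalAux m r d = 2*m+1) ∨
    (2*m ≤ d ∧ cvalAux m r d = d + 2) := by
  unfold cvalAux
  split_ifs with h1 h2 h3 h4
  · exact Or.inr (Or.inl ⟨h1, h2, rfl⟩)
  · exact Or.inl ⟨h1, h2, rfl⟩
  · exact Or.inr (Or.inr (Or.inr (Or.inl ⟨by omega, h3, h4, rfl⟩)))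
  · exact Or.inr (Or.inr (Or.inl ⟨by omega, h3, h4, rfl⟩))
  · exact Or.inr (Or.inr (Or.inr (Or.inr ⟨by omega, rfl⟩)))

lemma cval_lt {m n r j : ℕ} (hm : 2 ≤ m) (hmn : 2*m ≤ n) (hr : r < m) (hj : j < n) :
    cval m n r j < n + 2 := by
  have hd : (j + n - r) % n < n := Nat.mod_lt _ (by omega)
  have := cvalAux_spec m r ((j + n - r) % n)
  unfold cval; omega

lemma cval_ne_own {m n r j : ℕ} (hm : 2 ≤ m) (hmn : 2*m ≤ n) (hr : r < m) (hj : j < n) :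
    cval m n r j ≠ 2*r ∧ cval m n r j ≠ 2*r+1 := by
  have := cvalAux_spec m r ((j + n - r) % n)
  unfold cval; omega

lemma cval_inj_row {m n r j j' : ℕ} (hm : 2 ≤ m) (hmn : 2*m ≤ n) (hr : r < m)
    (hj : j < n) (hj' : j' < n) (heq : cval m n r j = cval m n r j') : j = j' := by
  have hd : (j + n - r) % n < n := Nat.mod_lt _ (by omega)
  have hd' : (j' + n - r) % n < n := Nat.mod_lt _ (by omega)
  have k1 : ((j + n - r) % n + r) % n = j := dval_add (by omega) hj
  have k2 : ((j' + n - r) % n + r) % n = j' := dval_add (by omega) hj'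
  have s1 := cvalAux_spec m r ((j + n - r) % n)
  have s2 := cvalAux_spec m r ((j' + n - r) % n)
  unfold cval at heq
  have hdd : (j + n - r) % n = (j' + n - r) % n := by omega
  rw [← k1, ← k2, hdd]

lemma cval_inj_col {m n r r' j : ℕ} (hm : 2 ≤ m) (hmn : 2*m ≤ n) (hr : r < m) (hr' : r' < m)
    (hj : j < n) (heq : cval m n r j = cval m n r' j) : r = r' := by
  have hd : (j + n - r) % n < n := Nat.mod_lt _ (by omega)
  have hd' : (j + n - r') % n < n := Nat.mod_lt _ (by omega)
  have k1 : ((j + n - r) % n + r) % n = j := dval_add (by omega) hj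
  have k2 : ((j + n - r') % n + r') % n = j := dval_add (by omega) hj
  have s1 := cvalAux_spec m r ((j + n - r) % n)
  have s2 := cvalAux_spec m r' ((j + n - r') % n)
  unfold cval at heq
  have e : ((j + n - r) % n + r) % n = ((j + n - r') % n + r') % n := by rw [k1, k2]
  rcases mod_cases3 e (by omega) (by omega) with h | h | h <;> omega

/-- No column contains both colors `2*i` and `2*i+1`. -/
lemma cval_pair_not_in_col {m n i j r r' : ℕ} (hm : 2 ≤ m) (hmn : 2*m ≤ n)
    (hi : i < m) (hr : r < m) (hr' : r' < m) (hj : j < n)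
    (e1 : cval m n r j = 2*i) (e2 : cval m n r' j = 2*i+1) : False := by
  have hd : (j + n - r) % n < n := Nat.mod_lt _ (by omega)
  have hd' : (j + n - r') % n < n := Nat.mod_lt _ (by omega)
  have k1 : ((j + n - r) % n + r) % n = j := dval_add (by omega) hj
  have k2 : ((j + n - r') % n + r') % n = j := dval_add (by omega) hj
  have s1 := cvalAux_spec m r ((j + n - r) % n)
  have s2 := cvalAux_spec m r' ((j + n - r') % n)
  unfold cval at e1 e2
  have e : ((j + n - r) % n + r) % n = ((j + n - r') % n + r') % n := by rw [k1, k2]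
  rcases mod_cases3 e (by omega) (by omega) with h | h | h <;> omega

/-- Row `i` contains every color of `[0, n+2)` other than `2*i` and `2*i+1`. -/
lemma cval_row_cover {m n i w : ℕ} (hm : 2 ≤ m) (hmn : 2*m ≤ n) (hi : i < m)
    (hw : w < n + 2) (h0 : w ≠ 2*i) (h1 : w ≠ 2*i+1) : ∃ j, j < n ∧ cval m n i j = w := by
  have hn : 0 < n := by omega
  -- pick the residue t
  
  rcases Nat.lt_or_ge w (2*m) with hlt | hge
  · rcases Nat.even_or_odd w with ⟨t, ht⟩ | ⟨t, ht⟩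
    · refine ⟨(t + i) % n, Nat.mod_lt _ hn, ?_⟩
      have hdv : (((t + i) % n) + n - i) % n = t := dval_inv (by omega) (by omega)
      unfold cval
      rw [hdv]
      have := cvalAux_spec m i t
      omega
    · refine ⟨((m + t) + i) % n, Nat.mod_lt _ hn, ?_⟩
      have hdv : ((((m + t) + i) % n) + n - i) % n = m + t := dval_inv (by omega) (by omega)
      unfold cval
      rw [hdv]
      have := cvalAux_spec m i (m + t)
      omega
  · rcases Nat.lt_or_ge w (2*m+2) with hlt2 | hge2
    · rcases Nat.lt_or_ge w (2*m+1) with hw1 | hw1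
      · -- w = 2*m : take t = i
        refine ⟨(i + i) % n, Nat.mod_lt _ hn, ?_⟩
        have hdv : (((i + i) % n) + n - i) % n = i := dval_inv (by omega) (by omega)
        unfold cval
        rw [hdv]
        have := cvalAux_spec m i i
        omega
      · -- w = 2*m+1 : take t = i + m
        refine ⟨((i + m) + i) % n, Nat.mod_lt _ hn, ?_⟩
        have hdv : ((((i + m) + i) % n) + n - i) % n = i + m := dval_inv (by omega) (by omega)
        unfold cval
        rw [hdv]
        have := cvalAux_spec m i (i + m)
        omega
    · -- w ≥ 2m+2 : take t = w - 2
      refine ⟨((w - 2) + i) % n, Nat.mod_lt _ hn, ?_⟩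
      have hdv : ((((w - 2) + i) % n) + n - i) % n = w - 2 := dval_inv (by omega) (by omega)
      unfold cval
      rw [hdv]
      have := cvalAux_spec m i (w - 2)
      omega

/-- Every vertex has a color of its own pair missing from its whole column. -/
lemma cval_missing {m n i j : ℕ} (hm : 2 ≤ m) (hmn : 2*m ≤ n) (hi : i < m) (hj : j < n) :
    ∃ x, (x = 2*i ∨ x = 2*i+1) ∧ ∀ r, r < m → cval m n r j ≠ x := by
  by_cases hA : ∃ r, r < m ∧ cval m n r j = 2*i
  · obtain ⟨r, hr, hcr⟩ := hA
    exact ⟨2*i+1, Or.inr rfl, fun r' hr' h' => cval_pair_not_in_col hm hmn hi hr hr' hj hcr h'⟩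
  · push_neg at hA
    exact ⟨2*i, Or.inl rfl, fun r hr h => hA r hr h⟩

/-- Shorthand for the box product of two complete graphs. -/
abbrev KG (m n : ℕ) : SimpleGraph (Fin m × Fin n) :=
  (⊤ : SimpleGraph (Fin m)) □ (⊤ : SimpleGraph (Fin n))

lemma KG_adj {m n : ℕ} {u v : Fin m × Fin n} :
    (KG m n).Adj u v ↔ (u.1 = v.1 ∧ u.2 ≠ v.2) ∨ (u.2 = v.2 ∧ u.1 ≠ v.1) := by
  rw [SimpleGraph.boxProd_adj]
  simp only [SimpleGraph.top_adj]
  tauto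

lemma KG_conn {m n : ℕ} (hm : 0 < m) (hn : 0 < n) : (KG m n).Connected := by
  haveI : Nonempty (Fin m) := ⟨⟨0, hm⟩⟩
  haveI : Nonempty (Fin n) := ⟨⟨0, hn⟩⟩
  exact (SimpleGraph.connected_boxProd).mpr ⟨SimpleGraph.connected_top, SimpleGraph.connected_top⟩

lemma KG_dist_two {m n : ℕ} (hm : 0 < m) (hn : 0 < n) {u v : Fin m × Fin n}
    (hne : u ≠ v) (hna : ¬ (KG m n).Adj u v) : (KG m n).dist u v = 2 := by
  have h1 : u.1 ≠ v.1 ∧ u.2 ≠ v.2 := by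
    rw [KG_adj] at hna
    push_neg at hna
    constructor
    · intro h; exact hne (Prod.ext h (hna.1 h))
    · intro h; exact hne (Prod.ext (hna.2 h) h)
  have a1 : (KG m n).Adj u (u.1, v.2) := KG_adj.mpr (Or.inl ⟨rfl, h1.2⟩)
  have a2 : (KG m n).Adj (u.1, v.2) v := KG_adj.mpr (Or.inr ⟨rfl, h1.1⟩)
  have hle : (KG m n).dist u v ≤ 2 := by
    have := SimpleGraph.dist_le (SimpleGraph.Walk.cons a1 (SimpleGraph.Adj.toWalk a2))
    simpa using this
  have hz : (KG m n).dist u v ≠ 0 := by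
    intro h
    rcases (SimpleGraph.dist_eq_zero_iff_eq_or_not_reachable).mp h with h' | h'
    · exact hne h'
    · exact h' ((KG_conn hm hn).preconnected u v)
  have ho : (KG m n).dist u v ≠ 1 := fun h => hna (SimpleGraph.dist_eq_one_iff_adj.mp h)
  omega

/-- The fundamental formula for color codes in `KG m n`. -/
lemma code_formula {m n k : ℕ} (hm : 0 < m) (hn : 0 < n) (c : Fin m × Fin n → Fin k)
    (hsurj : Function.Surjective c)
    (v : Fin m × Fin n) (x : Fin k) :
    colorCode (KG m n) c v x =
      if c v = x then 0 else if (∃ w, (KG m n).Adj v w ∧ c w = x) then 1 else 2 := by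
  classical
  have hconn := KG_conn hm hn
  show setDist (KG m n) v (c ⁻¹' {x}) = _
  unfold setDist
  by_cases h0 : c v = x
  · rw [if_pos h0]
    exact Nat.sInf_eq_zero.mpr (Or.inl ⟨v, h0, SimpleGraph.dist_self⟩)
  · rw [if_neg h0]
    have hz : ∀ y ∈ (KG m n).dist v '' (c ⁻¹' {x}), y ≠ 0 := by
      rintro y ⟨w, hw, rfl⟩ h
      rcases (SimpleGraph.dist_eq_zero_iff_eq_or_not_reachable).mp h with h' | h'
      · exact h0 (h' ▸ hw)
      · exact h' (hconn.preconnected v w)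
    by_cases h1 : ∃ w, (KG m n).Adj v w ∧ c w = x
    · rw [if_pos h1]
      obtain ⟨w, ha, hc⟩ := h1
      have mem1 : (1 : ℕ) ∈ (KG m n).dist v '' (c ⁻¹' {x}) :=
        ⟨w, hc, SimpleGraph.dist_eq_one_iff_adj.mpr ha⟩
      have hle := Nat.sInf_le mem1
      have hmem := Nat.sInf_mem (Set.nonempty_of_mem mem1)
      have := hz _ hmem
      omega
    · rw [if_neg h1]
      obtain ⟨w, hw⟩ := hsurj x
      have hwv : v ≠ w := fun h => h0 (h ▸ hw)
      have hna : ¬ (KG m n).Adj v w := fun h => h1 ⟨w, h, hw⟩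
      have mem2 : (2 : ℕ) ∈ (KG m n).dist v '' (c ⁻¹' {x}) :=
        ⟨w, hw, KG_dist_two hm hn hwv hna⟩
      have hone : ∀ y ∈ (KG m n).dist v '' (c ⁻¹' {x}), y ≠ 1 := by
        rintro y ⟨w', hw', rfl⟩ h
        exact h1 ⟨w', SimpleGraph.dist_eq_one_iff_adj.mp h, hw'⟩
      have hle := Nat.sInf_le mem2
      have hmem := Nat.sInf_mem (Set.nonempty_of_mem mem2)
      have := hz _ hmem
      have := hone _ hmem
      omega

lemma code_eq_color {m n k : ℕ} (hm : 0 < m) (hn : 0 < n) {c : Fin m × Fin n → Fin k}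
    (hsurj : Function.Surjective c) {u v : Fin m × Fin n}
    (h : colorCode (KG m n) c u = colorCode (KG m n) c v) : c u = c v := by
  have hu := code_formula hm hn c hsurj u (c u)
  have hv := code_formula hm hn c hsurj v (c u)
  have he := congrFun h (c u)
  rw [if_pos rfl] at hu
  by_contra hne
  rw [if_neg (fun hh : c v = c u => hne hh.symm)] at hv
  have : (0 : ℕ) = if (∃ w, (KG m n).Adj v w ∧ c w = c u) then 1 else 2 := by
    rw [← hv, ← he, hu]
  split_ifs at this <;> omega

lemma code_eq_present {m n k : ℕ} (hm : 0 < m) (hn : 0 < n) {c : Fin m × Fin n → Fin k}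
    (hsurj : Function.Surjective c) {u v : Fin m × Fin n}
    (h : colorCode (KG m n) c u = colorCode (KG m n) c v) (x : Fin k) (hx : c u ≠ x) :
    (∃ w, (KG m n).Adj u w ∧ c w = x) ↔ (∃ w, (KG m n).Adj v w ∧ c w = x) := by
  have hcc := code_eq_color hm hn hsurj h
  have hu := code_formula hm hn c hsurj u x
  have hv := code_formula hm hn c hsurj v x
  have he := congrFun h x
  rw [if_neg hx] at hu
  rw [if_neg (fun hh : c v = x => hx (hcc.trans hh))] at hv
  have key : (if (∃ w, (KG m n).Adj u w ∧ c w = x) then 1 else 2 : ℕ) =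
      (if (∃ w, (KG m n).Adj v w ∧ c w = x) then 1 else 2) := by
    rw [← hu, ← hv, he]
  by_cases h1 : ∃ w, (KG m n).Adj u w ∧ c w = x <;>
    by_cases h2 : ∃ w, (KG m n).Adj v w ∧ c w = x <;>
    simp only [if_pos, if_neg, h1, h2, if_true, if_false] at key ⊢ <;> tauto

lemma code_eq_of {m n k : ℕ} (hm : 0 < m) (hn : 0 < n) {c : Fin m × Fin n → Fin k}
    (hsurj : Function.Surjective c) {u v : Fin m × Fin n}
    (hcc : c u = c v)
    (hp : ∀ x, c u ≠ x →
      ((∃ w, (KG m n).Adj u w ∧ c w = x) ↔ (∃ w, (KG m n).Adj v w ∧ c w = x))) :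
    colorCode (KG m n) c u = colorCode (KG m n) c v := by
  funext x
  rw [code_formula hm hn c hsurj u x, code_formula hm hn c hsurj v x]
  by_cases h0 : c u = x
  · rw [if_pos h0, if_pos (hcc.symm.trans h0)]
  · rw [if_neg h0, if_neg (fun hh : c v = x => h0 (hcc.trans hh))]
    by_cases h1 : ∃ w, (KG m n).Adj u w ∧ c w = x
    · rw [if_pos h1, if_pos ((hp x h0).mp h1)]
    · rw [if_neg h1, if_neg (fun h => h1 ((hp x h0).mpr h))]

/-- The explicit coloring bundled as a function into `Fin (n+2)`. -/
def cF (m n : ℕ) (hm : 2 ≤ m) (hmn : 2*m ≤ n) : Fin m × Fin n → Fin (n+2) :=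
  fun p => ⟨cval m n p.1.val p.2.val, cval_lt hm hmn p.1.isLt p.2.isLt⟩

lemma cF_val {m n : ℕ} (hm : 2 ≤ m) (hmn : 2*m ≤ n) (p : Fin m × Fin n) :
    (cF m n hm hmn p).val = cval m n p.1.val p.2.val := rfl

/-- Upper bound: an explicit locating `(n+2)`-coloring of `K_m □ K_n`. -/
lemma upper {m n : ℕ} (hm : 2 ≤ m) (hmn : 2*m ≤ n) :
    ∃ c : Fin m × Fin n → Fin (n+2), IsLocatingColoring (KG m n) c := by
  have hm0 : 0 < m := by omega
  have hn0 : 0 < n := by omega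
  set c : Fin m × Fin n → Fin (n+2) := cF m n hm hmn with hcdef
  have hs : Function.Surjective c := by
    intro a
    rcases Nat.lt_or_ge a.val 2 with h2 | h2
    · obtain ⟨j, hj, hcj⟩ := cval_row_cover (i := 1) hm hmn (by omega) a.isLt
        (by omega) (by omega)
      exact ⟨(⟨1, by omega⟩, ⟨j, hj⟩), Fin.ext hcj⟩
    · obtain ⟨j, hj, hcj⟩ := cval_row_cover (i := 0) hm hmn (by omega) a.isLt
        (by omega) (by omega)
      exact ⟨(⟨0, hm0⟩, ⟨j, hj⟩), Fin.ext hcj⟩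
  have hp : ∀ u v, (KG m n).Adj u v → c u ≠ c v := by
    intro u v hadj heq
    have hval : cval m n u.1.val u.2.val = cval m n v.1.val v.2.val := congrArg Fin.val heq
    rcases KG_adj.mp hadj with ⟨e1, e2⟩ | ⟨e1, e2⟩
    · rw [e1] at hval
      exact e2 (Fin.ext (cval_inj_row hm hmn v.1.isLt u.2.isLt v.2.isLt hval))
    · rw [e1] at hval
      exact e2 (Fin.ext (cval_inj_col hm hmn u.1.isLt v.1.isLt v.2.isLt hval))
  refine ⟨c, hs, hp, ?_⟩
  intro u v h
  have hcc : c u = c v := code_eq_color hm0 hn0 hs h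
  have hval : cval m n u.1.val u.2.val = cval m n v.1.val v.2.val := congrArg Fin.val hcc
  by_cases h1 : u.1 = v.1
  · rw [h1] at hval
    exact Prod.ext h1 (Fin.ext (cval_inj_row hm hmn v.1.isLt u.2.isLt v.2.isLt hval))
  · exfalso
    obtain ⟨x, hx12, hxnot⟩ := cval_missing hm hmn u.1.isLt u.2.isLt
    have hxlt : x < n + 2 := by have := u.1.isLt; omega
    have hne : u.1.val ≠ v.1.val := fun hh => h1 (Fin.ext hh)
    have hv1 := v.1.isLt
    have hxa : x ≠ 2*v.1.val := by omega
    have hxb : x ≠ 2*v.1.val+1 := by omega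
    have hxc : c u ≠ (⟨x, hxlt⟩ : Fin (n+2)) :=
      fun hh => hxnot u.1.val u.1.isLt (congrArg Fin.val hh)
    have hiff := code_eq_present hm0 hn0 hs h (⟨x, hxlt⟩ : Fin (n+2)) hxc
    obtain ⟨j2, hj2, hcj2⟩ := cval_row_cover hm hmn v.1.isLt hxlt hxa hxb
    have hcvne : cval m n v.1.val v.2.val ≠ x := by
      rw [← hval]; exact fun hh => hxc (Fin.ext hh)
    have hPv : ∃ w, (KG m n).Adj v w ∧ c w = (⟨x, hxlt⟩ : Fin (n+2)) := by
      refine ⟨(v.1, ⟨j2, hj2⟩), KG_adj.mpr (Or.inl ⟨rfl, ?_⟩), Fin.ext hcj2⟩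
      intro hh
      exact hcvne (by rw [hh]; exact hcj2)
    have hPu : ¬ ∃ w, (KG m n).Adj u w ∧ c w = (⟨x, hxlt⟩ : Fin (n+2)) := by
      rintro ⟨w, hadj, hcw⟩
      have hw : cval m n w.1.val w.2.val = x := congrArg Fin.val hcw
      rcases KG_adj.mp hadj with ⟨e1, e2⟩ | ⟨e1, e2⟩
      · rw [← e1] at hw
        rcases hx12 with h' | h'
        · exact (cval_ne_own hm hmn u.1.isLt w.2.isLt).1 (h' ▸ hw)
        · exact (cval_ne_own hm hmn u.1.isLt w.2.isLt).2 (h' ▸ hw)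
      · rw [← e1] at hw
        exact hxnot w.1.val w.1.isLt hw
    exact hPu (hiff.mpr hPv)

/-- Lower bound: any locating coloring of `K_m □ K_n` needs at least `n+2` colors. -/
lemma lower {m n : ℕ} (hm : 2 ≤ m) (hmn : m ≤ n) (h2 : 2*m ≤ n)
    (hcount : n + 2 ≤ m * (m - 1)) :
    ∀ k (c : Fin m × Fin n → Fin k), IsLocatingColoring (KG m n) c → n + 2 ≤ k := by
  intro k c hloc
  obtain ⟨hs, hp, hinj⟩ := hloc
  have hm0 : 0 < m := by omega
  have hn0 : 0 < n := by omega
  have hrow : ∀ (i : Fin m) (j j' : Fin n), c (i, j) = c (i, j') → j = j' := by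
    intro i j j' hcc
    by_contra hne
    exact hp (i,j) (i,j') (KG_adj.mpr (Or.inl ⟨rfl, hne⟩)) hcc
  have hcol : ∀ (j : Fin n) (r r' : Fin m), c (r, j) = c (r', j) → r = r' := by
    intro j r r' hcc
    by_contra hne
    exact hp (r,j) (r',j) (KG_adj.mpr (Or.inr ⟨rfl, hne⟩)) hcc
  have hnk : n ≤ k := by
    have hinj0 : Function.Injective (fun j : Fin n => c (⟨0, hm0⟩, j)) :=
      fun j j' hh => hrow _ _ _ hh
    have := Fintype.card_le_of_injective _ hinj0
    simpa using this
  by_contra hcon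
  push_neg at hcon
  rcases (by omega : k = n ∨ k = n + 1) with hk | hk
  · -- k = n : every color appears in every row, codes collapse
    subst hk
    have hrs : ∀ (i : Fin m), Function.Surjective (fun j : Fin k => c (i, j)) := by
      intro i
      exact Finite.injective_iff_surjective.mp (fun j j' hh => hrow _ _ _ hh)
    have hall : ∀ (v : Fin m × Fin k) (x : Fin k), c v ≠ x →
        ∃ w, (KG m k).Adj v w ∧ c w = x := by
      intro v x hne
      obtain ⟨j', hj'⟩ := hrs v.1 x
      have hj'' : c (v.1, j') = x := hj'
      refine ⟨(v.1, j'), KG_adj.mpr (Or.inl ⟨rfl, fun hh => hne ?_⟩), hj''⟩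
      rw [show v = (v.1, j') from Prod.ext rfl hh, hj'']
    obtain ⟨j1, hj1⟩ := hrs ⟨1, by omega⟩ (c (⟨0, hm0⟩, ⟨0, hn0⟩))
    have hj1' : c (⟨1, by omega⟩, j1) = c (⟨0, hm0⟩, ⟨0, hn0⟩) := hj1
    have huv : ((⟨0, hm0⟩, ⟨0, hn0⟩) : Fin m × Fin k) ≠ (⟨1, by omega⟩, j1) := by
      intro hh
      have := congrArg (fun p : Fin m × Fin k => p.1.val) hh
      simp at this
    apply huv
    apply hinj
    apply code_eq_of hm0 hn0 hs hj1'.symm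
    intro x hx
    exact iff_of_true (hall _ x hx) (hall _ x (fun hh => hx (hj1'.symm.trans hh)))
  · -- k = n+1 : the counting argument
    subst hk
    have hmiss : ∀ i : Fin m, ∃ fi : Fin (n+1),
        (∀ j, c (i,j) ≠ fi) ∧ (∀ a, a ≠ fi → ∃ j, c (i,j) = a) := by
      intro i
      have hcard : (Finset.univ.image (fun j : Fin n => c (i,j))).card = n := by
        rw [Finset.card_image_of_injective _ (fun j j' hh => hrow i j j' hh)]
        simp
      have hneu : (Finset.univ.image (fun j : Fin n => c (i,j))) ≠ Finset.univ := by
        intro hh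
        rw [hh] at hcard
        simp at hcard
      have hex : ∃ fi : Fin (n+1), fi ∉ Finset.univ.image (fun j : Fin n => c (i,j)) := by
        by_contra hno
        push_neg at hno
        exact hneu (Finset.eq_univ_iff_forall.mpr hno)
      obtain ⟨fi, hfi⟩ := hex
      refine ⟨fi, fun j hh => hfi (Finset.mem_image.mpr ⟨j, Finset.mem_univ _, hh⟩), ?_⟩
      intro a ha
      by_contra hno
      push_neg at hno
      have hsub : (Finset.univ.image (fun j : Fin n => c (i,j))) ⊆
          (Finset.univ.erase fi).erase a := by
        intro b hb
        obtain ⟨j, _, rfl⟩ := Finset.mem_image.mp hb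
        exact Finset.mem_erase.mpr ⟨fun hh => hno j hh,
          Finset.mem_erase.mpr ⟨fun hh => hfi (hh ▸ Finset.mem_image.mpr ⟨j, Finset.mem_univ _, rfl⟩), Finset.mem_univ _⟩⟩
      have hle := Finset.card_le_card hsub
      rw [hcard, Finset.card_erase_of_mem
          (Finset.mem_erase.mpr ⟨ha, Finset.mem_univ _⟩),
          Finset.card_erase_of_mem (Finset.mem_univ _)] at hle
      simp at hle
      omega
    choose f hf1 hf2 using hmiss
    have hProw : ∀ (i : Fin m) (j : Fin n) (x : Fin (n+1)), x ≠ c (i,j) → x ≠ f i →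
        ∃ w, (KG m n).Adj (i,j) w ∧ c w = x := by
      intro i j x hx1 hx2
      obtain ⟨j', hj'⟩ := hf2 i x (fun hh => hx2 hh)
      refine ⟨(i, j'), KG_adj.mpr (Or.inl ⟨rfl, fun hh : j = j' => hx1 ?_⟩), hj'⟩
      rw [hh]
      exact hj'.symm
    have hPcol : ∀ (i r : Fin m) (j : Fin n) (x : Fin (n+1)), c (r, j) = x → r ≠ i →
        ∃ w, (KG m n).Adj (i,j) w ∧ c w = x := by
      intro i r j x hcr hri
      exact ⟨(r, j), KG_adj.mpr (Or.inr ⟨rfl, fun hh : i = r => hri hh.symm⟩), hcr⟩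
    -- uniqueness of a "saturated" vertex per color
    have hU : ∀ (i i' : Fin m) (j j' : Fin n),
        c (i,j) = c (i',j') →
        (∃ r, r ≠ i ∧ c (r, j) = f i) → (∃ r', r' ≠ i' ∧ c (r', j') = f i') →
        ((i,j) : Fin m × Fin n) = (i',j') := by
      rintro i i' j j' hcc ⟨r, hr, hcr⟩ ⟨r', hr', hcr'⟩
      apply hinj
      apply code_eq_of hm0 hn0 hs hcc
      intro x hx
      have p1 : ∃ w, (KG m n).Adj (i,j) w ∧ c w = x := by
        by_cases hxf : x = f i
        · exact hPcol i r j x (hxf ▸ hcr) hr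
        · exact hProw i j x (fun hh => hx hh.symm) hxf
      have p2 : ∃ w, (KG m n).Adj (i',j') w ∧ c w = x := by
        by_cases hxf : x = f i'
        · exact hPcol i' r' j' x (hxf ▸ hcr') hr'
        · exact hProw i' j' x (fun hh => hx (hcc.trans hh.symm)) hxf
      exact iff_of_true p1 p2
    -- Step 1 : f is injective
    have hfinj : Function.Injective f := by
      intro i i' hff
      by_contra hii
      have hcols : ∀ a : Fin (n+1), ∃ (j1 j2 : Fin n), a ≠ f i →
          c (i, j1) = a ∧ c (i', j2) = a := by
        intro a
        by_cases ha : a ≠ f i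
        · obtain ⟨j1, hj1⟩ := hf2 i a ha
          obtain ⟨j2, hj2⟩ := hf2 i' a (by rw [← hff]; exact ha)
          exact ⟨j1, j2, fun _ => ⟨hj1, hj2⟩⟩
        · exact ⟨⟨0, hn0⟩, ⟨0, hn0⟩, fun hh => (ha hh).elim⟩
      choose j1f j2f hj12 using hcols
      have hcover : ∀ a : Fin (n+1), ∃ (r : Fin m) (b : Bool), a ≠ f i →
          (r ≠ i ∧ r ≠ i' ∧ c (r, if b then j1f a else j2f a) = f i) := by
        intro a
        by_cases ha : a ≠ f i
        · obtain ⟨h1, h2⟩ := hj12 a ha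
          have key : (∃ r : Fin m, c (r, j1f a) = f i) ∨
              (∃ r : Fin m, c (r, j2f a) = f i) := by
            by_contra hno
            push_neg at hno
            obtain ⟨hno1, hno2⟩ := hno
            apply hii
            have heq : ((i, j1f a) : Fin m × Fin n) = (i', j2f a) := by
              apply hinj
              apply code_eq_of hm0 hn0 hs (h1.trans h2.symm)
              intro x hx
              by_cases hxf : x = f i
              · apply iff_of_false
                · rintro ⟨w, hadj, hcw⟩
                  rcases KG_adj.mp hadj with ⟨e1, e2⟩ | ⟨e1, e2⟩
                  · exact hf1 i w.2 (by
                      rw [show w = (i, w.2) from Prod.ext e1.symm rfl] at hcw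
                      rw [hcw, hxf])
                  · exact hno1 w.1 (by
                      rw [show w = (w.1, j1f a) from Prod.ext rfl e1.symm] at hcw
                      rw [hcw, hxf])
                · rintro ⟨w, hadj, hcw⟩
                  rcases KG_adj.mp hadj with ⟨e1, e2⟩ | ⟨e1, e2⟩
                  · exact hf1 i' w.2 (by
                      rw [show w = (i', w.2) from Prod.ext e1.symm rfl] at hcw
                      rw [hcw, hxf, hff])
                  · exact hno2 w.1 (by
                      rw [show w = (w.1, j2f a) from Prod.ext rfl e1.symm] at hcw
                      rw [hcw, hxf])
              · apply iff_of_true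
                · exact hProw i (j1f a) x (fun hh => hx hh.symm) hxf
                · exact hProw i' (j2f a) x
                    (fun hh => hx (h1.trans (h2.symm.trans hh.symm)))
                    (by rw [← hff]; exact hxf)
            exact congrArg Prod.fst heq
          rcases key with ⟨r, hr⟩ | ⟨r, hr⟩
          · refine ⟨r, true, fun _ => ⟨?_, ?_, by simpa using hr⟩⟩
            · intro hh
              exact hf1 i (j1f a) (hh ▸ hr)
            · intro hh
              exact hf1 i' (j1f a) (by rw [← hff]; exact hh ▸ hr)
          · refine ⟨r, false, fun _ => ⟨?_, ?_, by simpa using hr⟩⟩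
            · intro hh
              exact hf1 i (j2f a) (hh ▸ hr)
            · intro hh
              exact hf1 i' (j2f a) (by rw [← hff]; exact hh ▸ hr)
        · exact ⟨⟨0, hm0⟩, true, fun hh => (ha hh).elim⟩
      choose rfn bfn hrb using hcover
      have hmaps : ∀ a ∈ Finset.univ.erase (f i),
          (rfn a, bfn a) ∈ ((Finset.univ.erase i).erase i') ×ˢ (Finset.univ : Finset Bool) := by
        intro a ha
        have ha' : a ≠ f i := (Finset.mem_erase.mp ha).1
        obtain ⟨e1, e2, _⟩ := hrb a ha'
        exact Finset.mem_product.mpr ⟨Finset.mem_erase.mpr ⟨e2,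
          Finset.mem_erase.mpr ⟨e1, Finset.mem_univ _⟩⟩, Finset.mem_univ _⟩
      have hinj1 : Set.InjOn (fun a => (rfn a, bfn a))
          (Finset.univ.erase (f i) : Finset (Fin (n+1))) := by
        intro a ha a' ha' hpq
        have haa : a ≠ f i := (Finset.mem_erase.mp (Finset.mem_coe.mp ha)).1
        have haa' : a' ≠ f i := (Finset.mem_erase.mp (Finset.mem_coe.mp ha')).1
        have e1 : rfn a = rfn a' := congrArg Prod.fst hpq
        have e2 : bfn a = bfn a' := congrArg Prod.snd hpq
        obtain ⟨_, _, h3⟩ := hrb a haa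
        obtain ⟨_, _, h3'⟩ := hrb a' haa'
        rw [e1, e2] at h3
        cases hb : bfn a'
        · rw [hb] at h3 h3'
          simp only [if_neg Bool.false_ne_true, Bool.false_eq_true, if_false] at h3 h3'
          have hj : j2f a = j2f a' := hrow _ _ _ (h3.trans h3'.symm)
          have c1 := (hj12 a haa).2
          have c2 := (hj12 a' haa').2
          rw [hj] at c1
          exact c1.symm.trans c2
        · rw [hb] at h3 h3'
          simp only [if_true] at h3 h3'
          have hj : j1f a = j1f a' := hrow _ _ _ (h3.trans h3'.symm)
          have c1 := (hj12 a haa).1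
          have c2 := (hj12 a' haa').1
          rw [hj] at c1
          exact c1.symm.trans c2
      have hcard := Finset.card_le_card_of_injOn _ hmaps hinj1
      rw [Finset.card_erase_of_mem (Finset.mem_univ _)] at hcard
      have ht : (((Finset.univ.erase i).erase i') ×ˢ (Finset.univ : Finset Bool)).card
          = (m - 2) * 2 := by
        rw [Finset.card_product, Finset.card_erase_of_mem
            (Finset.mem_erase.mpr ⟨fun hh => hii hh.symm, Finset.mem_univ _⟩),
          Finset.card_erase_of_mem (Finset.mem_univ _)]
        simp only [Finset.card_univ, Fintype.card_fin, Fintype.card_bool]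
        omega
      rw [ht] at hcard
      simp at hcard
      omega
    -- Step 2 : the final count
    have hJ : ∀ p : Fin m × Fin m, ∃ j : Fin n, p.1 ≠ p.2 → c (p.2, j) = f p.1 := by
      intro p
      by_cases hpp : p.1 = p.2
      · exact ⟨⟨0, hn0⟩, fun hh => (hh hpp).elim⟩
      · obtain ⟨j, hj⟩ := hf2 p.2 (f p.1) (fun hh => hpp (hfinj hh))
        exact ⟨j, fun _ => hj⟩
    choose J hJ' using hJ
    have hinj2 : Set.InjOn (fun p : Fin m × Fin m => c (p.1, J p))
        ((Finset.univ.offDiag : Finset (Fin m × Fin m)) : Set (Fin m × Fin m)) := by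
      intro p hp q hq hpq
      have hp' : p.1 ≠ p.2 := (Finset.mem_offDiag.mp (Finset.mem_coe.mp hp)).2.2
      have hq' : q.1 ≠ q.2 := (Finset.mem_offDiag.mp (Finset.mem_coe.mp hq)).2.2
      have he := hU p.1 q.1 (J p) (J q) hpq
        ⟨p.2, Ne.symm hp', hJ' p hp'⟩ ⟨q.2, Ne.symm hq', hJ' q hq'⟩
      have e1 : p.1 = q.1 := (Prod.ext_iff.mp he).1
      have e2 : J p = J q := (Prod.ext_iff.mp he).2
      have e3 : p.2 = q.2 := by
        apply hcol (J p)
        rw [hJ' p hp', show J p = J q from e2, hJ' q hq', e1]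
      exact Prod.ext e1 e3
    have hcard2 := Finset.card_le_card_of_injOn _
      (fun p _ => Finset.mem_univ (c (p.1, J p))) hinj2
    rw [Finset.offDiag_card] at hcard2
    simp only [Finset.card_univ, Fintype.card_fin, Fintype.card_prod] at hcard2
    have hmul : m * ((m-1)+1) = m*(m-1)+m := Nat.mul_succ m (m-1)
    rw [show (m-1)+1 = m by omega] at hmul
    omega

/-- With `m_0 = max {k : k(k-1) - 1 ≤ n}`, if `2 ≤ m ≤ n`, `n ≥ 3`
and `m_0 + 1 ≤ m ≤ n / 2`, then `χ_L(K_m □ K_n) = n + 2`. -/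
theorem stmt12 (m n m₀ : ℕ) (hm : 2 ≤ m) (hmn : m ≤ n) (hn : 3 ≤ n)
    (hm₀ : IsGreatest {k : ℕ | k * (k - 1) - 1 ≤ n} m₀)
    (h₁ : m₀ + 1 ≤ m) (h₂ : 2 * m ≤ n) :
    locatingChromaticNumber
      ((⊤ : SimpleGraph (Fin m)) □ (⊤ : SimpleGraph (Fin n))) = n + 2 := by
  have hub := upper hm h₂
  have hmem : (n+2) ∈ {k : ℕ | ∃ c : Fin m × Fin n → Fin k,
      IsLocatingColoring (KG m n) c} := hub
  have hcount : n + 2 ≤ m * (m - 1) := by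
    rcases Nat.lt_or_ge (m * (m-1)) (n+2) with hc | hc
    · exfalso
      have hmem' : m ∈ {k : ℕ | k * (k - 1) - 1 ≤ n} := by
        simp only [Set.mem_setOf_eq]
        generalize hA : m * (m - 1) = A at hc ⊢
        omega
      have := hm₀.2 hmem'
      omega
    · exact hc
  unfold locatingChromaticNumber
  apply le_antisymm
  · exact Nat.sInf_le hmem
  · apply le_csInf ⟨n+2, hmem⟩
    rintro k ⟨c, hc⟩
    exact lower hm hmn h₂ hcount k c hc
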